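/- Let s ≥ 1, let σ = 2^s, let α ≥ 1, and let P and Q be lists over Fin σ, each of length α, with P ≠ Q. Interpret P and Q as natural numbers p = toNat(P) and q = toNat(Q) via big-endian base-σ encoding (so that each letter occupies s consecutive bits). Then the length of the longest common prefix of P and Q (as lists of letters) equals α − 1 − (Nat.log2 (Nat.xor p q)) / s, where the division is natural-number (floor) division. -/

import Mathlib

/-- Length of the longest common prefix of two lists. -/
def lcpLen {α : Type*} [DecidableEq α] : List α → List α → ℕ
  | a :: x, b :: y => if a = b then lcpLen x y + 1 else 0
  | _, _ => 0

/-- Big-endian base-`σ` encoding of a list over `Fin σ`. -/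
def finToNat {σ : ℕ} (X : List (Fin σ)) : ℕ :=
  ∑ i : Fin X.length, (X.get i : ℕ) * σ ^ (X.length - 1 - (i : ℕ))

theorem finToNat_cons {σ : ℕ} (a : Fin σ) (x : List (Fin σ)) :
    finToNat (a :: x) = (a : ℕ) * σ ^ x.length + finToNat x := by
  show ∑ i : Fin (x.length + 1), ((a :: x).get i : ℕ) * σ ^ (x.length + 1 - 1 - (i : ℕ)) = _
  rw [Fin.sum_univ_succ]
  simp only [List.get_cons_zero, Fin.val_zero, Nat.add_sub_cancel, Nat.sub_zero,
    List.get_cons_succ, Fin.val_succ]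
  congr 1
  apply Finset.sum_congr rfl
  intro i _
  congr 2
  omega

theorem finToNat_lt {σ : ℕ} (hσ : 0 < σ) (x : List (Fin σ)) :
    finToNat x < σ ^ x.length := by
  induction x with
  | nil => simpa [finToNat] using Nat.one_pos
  | cons a x ih =>
    rw [finToNat_cons]
    have ha : (a : ℕ) + 1 ≤ σ := a.isLt
    calc (a : ℕ) * σ ^ x.length + finToNat x < (a : ℕ) * σ ^ x.length + σ ^ x.length := by omega
      _ = ((a : ℕ) + 1) * σ ^ x.length := by ring
      _ ≤ σ * σ ^ x.length := Nat.mul_le_mul_right _ ha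
      _ = σ ^ (a :: x).length := by rw [show (a :: x).length = x.length + 1 from rfl]; ring

theorem finToNat_inj {σ : ℕ} (hσ : 0 < σ) : ∀ (x y : List (Fin σ)),
    x.length = y.length → finToNat x = finToNat y → x = y := by
  intro x
  induction x with
  | nil => intro y h _; cases y with
    | nil => rfl
    | cons b y => simp at h
  | cons a x ih =>
    intro y h heq
    cases y with
    | nil => simp at h
    | cons b y =>
      have hlen : x.length = y.length := by simpa using h
      rw [finToNat_cons, finToNat_cons, ← hlen] at heq
      have hp := finToNat_lt hσ x
      have hq := finToNat_lt hσ y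
      rw [← hlen] at hq
      have hab : (a : ℕ) = (b : ℕ) := by
        rcases Nat.lt_trichotomy (a : ℕ) (b : ℕ) with h1 | h1 | h1
        · nlinarith [Nat.mul_le_mul_right (σ ^ x.length) (Nat.succ_le_of_lt h1)]
        · exact h1
        · nlinarith [Nat.mul_le_mul_right (σ ^ x.length) (Nat.succ_le_of_lt h1)]
      have : a = b := Fin.ext hab
      subst this
      have : finToNat x = finToNat y := by omega
      rw [ih y hlen this]

theorem xor_split {k a b p q : ℕ} (hp : p < 2^k) (hq : q < 2^k) :
    Nat.xor (a * 2^k + p) (b * 2^k + q) = (Nat.xor a b) * 2^k + Nat.xor p q := by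
  have hx : p ^^^ q < 2^k := Nat.xor_lt_two_pow hp hq
  show (a * 2^k + p) ^^^ (b * 2^k + q) = (a ^^^ b) * 2^k + (p ^^^ q)
  apply Nat.eq_of_testBit_eq
  intro j
  rw [Nat.testBit_xor, mul_comm a, mul_comm b, mul_comm (a ^^^ b),
    Nat.testBit_two_pow_mul_add _ hp, Nat.testBit_two_pow_mul_add _ hq,
    Nat.testBit_two_pow_mul_add _ hx]
  split <;> rw [Nat.testBit_xor]

theorem log2_split {k h l : ℕ} (hh : h ≠ 0) (hl : l < 2^k) :
    Nat.log2 (h * 2^k + l) = Nat.log2 h + k := by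
  have hne : h * 2^k + l ≠ 0 := by positivity
  apply le_antisymm
  · have hlt : h * 2^k + l < 2^(Nat.log2 h + k + 1) := by
      calc h * 2^k + l < (h+1) * 2^k := by rw [add_mul, one_mul]; omega
        _ ≤ 2^(Nat.log2 h + 1) * 2^k := by
            have := Nat.lt_log2_self (n := h)
            exact Nat.mul_le_mul_right _ (by omega)
        _ = 2^(Nat.log2 h + k + 1) := by ring
    have := (Nat.log2_lt hne).2 hlt
    omega
  · apply (Nat.le_log2 hne).2
    calc 2^(Nat.log2 h + k) = 2^(Nat.log2 h) * 2^k := by ring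
      _ ≤ h * 2^k := Nat.mul_le_mul_right _ ((Nat.le_log2 hh).1 le_rfl)
      _ ≤ h * 2^k + l := Nat.le_add_right _ _

theorem key (s : ℕ) (hs : 1 ≤ s) : ∀ (P Q : List (Fin (2^s))), P.length = Q.length → P ≠ Q →
    lcpLen P Q = P.length - 1 - Nat.log2 (Nat.xor (finToNat P) (finToNat Q)) / s := by
  have hσ : 0 < 2^s := Nat.pow_pos (by norm_num)
  intro P
  induction P with
  | nil =>
    intro Q h hne
    cases Q with
    | nil => exact absurd rfl hne
    | cons b y => simp at h
  | cons a x ih =>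
    intro Q h hne
    cases Q with
    | nil => simp at h
    | cons b y =>
      have hlen : x.length = y.length := by simpa using h
      set n := x.length with hn
      have hp : finToNat x < 2^(s*n) := by
        have := finToNat_lt hσ x
        rwa [← pow_mul] at this
      have hq : finToNat y < 2^(s*n) := by
        have := finToNat_lt hσ y
        rwa [← hlen, ← pow_mul] at this
      have hcons : Nat.xor (finToNat (a :: x)) (finToNat (b :: y))
          = (Nat.xor (a : ℕ) (b : ℕ)) * 2^(s*n) + Nat.xor (finToNat x) (finToNat y) := by
        rw [finToNat_cons, finToNat_cons, ← hlen, ← hn, ← pow_mul]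
        exact xor_split hp hq
      by_cases hab : a = b
      · subst hab
        have hxy : x ≠ y := fun hh => hne (by rw [hh])
        have hpq : finToNat x ≠ finToNat y := fun hh => hxy (finToNat_inj hσ x y hlen hh)
        have hxor : Nat.xor (finToNat x) (finToNat y) ≠ 0 :=
          fun hh => hpq (xor_eq_zero_iff.1 hh)
        have hx0 : Nat.xor (a : ℕ) (a : ℕ) = 0 := Nat.xor_self _
        rw [show lcpLen (a :: x) (a :: y) = lcpLen x y + 1 from by simp [lcpLen],
          ih y hlen hxy, hcons, hx0, Nat.zero_mul, Nat.zero_add]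
        have hn1 : 1 ≤ n := by
          rcases Nat.eq_zero_or_pos n with h0 | h0
          · exfalso
            have hx : x = [] := List.length_eq_zero_iff.1 h0
            have hy : y = [] := List.length_eq_zero_iff.1 (by omega)
            exact hxy (hx.trans hy.symm)
          · exact h0
        have hlt : Nat.xor (finToNat x) (finToNat y) < 2^(s*n) := Nat.xor_lt_two_pow hp hq
        have hL : Nat.log2 (Nat.xor (finToNat x) (finToNat y)) < s * n :=
          (Nat.log2_lt hxor).2 hlt
        have hLs : Nat.log2 (Nat.xor (finToNat x) (finToNat y)) / s < n := by
          rw [Nat.div_lt_iff_lt_mul (by omega : 0 < s), Nat.mul_comm]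
          exact hL
        simp only [List.length_cons, ← hn]
        generalize Nat.log2 (Nat.xor (finToNat x) (finToNat y)) / s = L at hLs ⊢
        omega
      · have hab' : Nat.xor (a : ℕ) (b : ℕ) ≠ 0 :=
          fun hh => hab (Fin.ext (xor_eq_zero_iff.1 hh))
        have habl : Nat.log2 (Nat.xor (a : ℕ) (b : ℕ)) < s := by
          apply (Nat.log2_lt hab').2
          exact Nat.xor_lt_two_pow a.isLt b.isLt
        have hlt : Nat.xor (finToNat x) (finToNat y) < 2^(s*n) := Nat.xor_lt_two_pow hp hq
        rw [show lcpLen (a :: x) (b :: y) = 0 from by simp [lcpLen, hab],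
          hcons, log2_split hab' hlt]
        have : (Nat.log2 (Nat.xor (a : ℕ) (b : ℕ)) + s * n) / s = n := by
          rw [Nat.mul_comm, Nat.add_mul_div_right _ _ (by omega : 0 < s),
            Nat.div_eq_of_lt habl, Nat.zero_add]
        rw [this]
        simp only [List.length_cons, ← hn]
        omega

theorem lcp_eq_of_xor_msb_packed (s : ℕ) (hs : 1 ≤ s) (α : ℕ) (hα : 1 ≤ α)
    (P Q : List (Fin (2 ^ s)))
    (hP : P.length = α) (hQ : Q.length = α) (hne : P ≠ Q) :
    lcpLen P Q = α - 1 - Nat.log2 (Nat.xor (finToNat P) (finToNat Q)) / s := by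
  rw [← hP]
  exact key s hs P Q (by omega) hne
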